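/- (Analytic core of Theorem 1.) Let s ≤ n be natural numbers, m : ℕ → ℝ, and p : ℕ → {0,1}. Assume: (i) for every i with s ≤ i < n, if p(i+1) = 0 then m(i+1) ≥ m(i) − 3.73·ln 2, and if p(i+1) = 1 then m(i+1) = 2·m(i); (ii) m(i) ≥ 14.92·ln 2 for every i with s ≤ i ≤ n; (iii) Σ_{i=s+1}^{n} p(i) ≥ (9/20)·(n−s). Then the Gaussian-approximation bit error probability of the resulting splitting channel satisfies Q(√(m(n)/2)) < 2^{−2.33(n−s)/2 − 3.73}, where Q(x) = (1/√(2π)) ∫_{x}^{∞} e^{−t²/2} dt. Hence splitting channels whose polarization trajectory lies in T_s(2^{−4}) ∩ U_{s,n}(1/20) have error probability O(N^{−2.33/2}) for code length N = 2^n, i.e., their capacities approach 1. -/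

import Mathlib

open Real MeasureTheory Finset Filter

/-- The Gaussian Q-function: the tail of the standard normal distribution. -/
noncomputable def gaussQ (x : ℝ) : ℝ :=
  (1 / Real.sqrt (2 * Real.pi)) * ∫ t in Set.Ioi x, Real.exp (-t ^ 2 / 2)

lemma my_tail_integral (x : ℝ) :
    ∫ t in Set.Ioi x, t * Real.exp (-t ^ 2 / 2) = Real.exp (-x ^ 2 / 2) := by
  have hint : IntegrableOn (fun t : ℝ => t * Real.exp (-t ^ 2 / 2)) (Set.Ioi x) := by
    have := integrable_mul_exp_neg_mul_sq (b := (1/2 : ℝ)) (by norm_num)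
    have h2 : (fun t : ℝ => t * Real.exp (-t ^ 2 / 2)) = fun t : ℝ => t * Real.exp (-(1/2) * t ^ 2) := by
      funext t; ring_nf
    rw [h2]; exact this.integrableOn
  have hderiv : ∀ t ∈ Set.Ici x,
      HasDerivAt (fun t : ℝ => -Real.exp (-t ^ 2 / 2)) (t * Real.exp (-t ^ 2 / 2)) t := by
    intro t _
    have h1 : HasDerivAt (fun t : ℝ => -t ^ 2 / 2) (-t) t := by
      have := (hasDerivAt_pow 2 t).neg.div_const 2
      exact this.congr_deriv (by norm_num; ring)
    have := (h1.exp).neg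
    exact this.congr_deriv (by ring)
  have htend : Tendsto (fun t : ℝ => -Real.exp (-t ^ 2 / 2)) atTop (nhds 0) := by
    have h1 : Tendsto (fun t : ℝ => -t ^ 2 / 2) atTop atBot := by
      have h0 : Tendsto (fun t : ℝ => t ^ 2) atTop atTop := tendsto_pow_atTop (by norm_num)
      exact Tendsto.atBot_div_const (by norm_num) (tendsto_neg_atBot_iff.mpr h0)
    have := Real.tendsto_exp_atBot.comp h1
    simpa using this.neg
  have := integral_Ioi_of_hasDerivAt_of_tendsto' hderiv hint htend
  rw [this]; simp

lemma my_gaussQ_le {x : ℝ} (hx : 0 < x) :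
    gaussQ x ≤ Real.exp (-x ^ 2 / 2) / (x * Real.sqrt (2 * Real.pi)) := by
  have hint : IntegrableOn (fun t : ℝ => Real.exp (-t ^ 2 / 2)) (Set.Ioi x) := by
    have := integrable_exp_neg_mul_sq (b := (1/2 : ℝ)) (by norm_num)
    have h2 : (fun t : ℝ => Real.exp (-t ^ 2 / 2)) = fun t : ℝ => Real.exp (-(1/2) * t ^ 2) := by
      funext t; ring_nf
    rw [h2]; exact this.integrableOn
  have hint2 : IntegrableOn (fun t : ℝ => t * Real.exp (-t ^ 2 / 2)) (Set.Ioi x) := by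
    have := integrable_mul_exp_neg_mul_sq (b := (1/2 : ℝ)) (by norm_num)
    have h2 : (fun t : ℝ => t * Real.exp (-t ^ 2 / 2)) = fun t : ℝ => t * Real.exp (-(1/2) * t ^ 2) := by
      funext t; ring_nf
    rw [h2]; exact this.integrableOn
  have hmono : ∫ t in Set.Ioi x, Real.exp (-t ^ 2 / 2) ≤
      ∫ t in Set.Ioi x, (1 / x) * (t * Real.exp (-t ^ 2 / 2)) := by
    refine setIntegral_mono_on hint (hint2.const_mul _) measurableSet_Ioi ?_
    intro t ht
    rw [Set.mem_Ioi] at ht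
    rw [← mul_assoc]
    have h1 : (1 : ℝ) ≤ 1 / x * t := by
      rw [div_mul_eq_mul_div, one_mul, le_div_iff₀ hx, one_mul]
      exact ht.le
    nlinarith [Real.exp_pos (-t ^ 2 / 2)]
  rw [MeasureTheory.integral_const_mul, my_tail_integral] at hmono
  have hsq : (0:ℝ) < Real.sqrt (2 * Real.pi) :=
    Real.sqrt_pos.mpr (by positivity)
  have : gaussQ x ≤ (1 / Real.sqrt (2 * Real.pi)) * (1 / x * Real.exp (-x ^ 2 / 2)) := by
    unfold gaussQ
    exact mul_le_mul_of_nonneg_left hmono (by positivity)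
  calc gaussQ x ≤ (1 / Real.sqrt (2 * Real.pi)) * (1 / x * Real.exp (-x ^ 2 / 2)) := this
    _ = Real.exp (-x ^ 2 / 2) / (x * Real.sqrt (2 * Real.pi)) := by
        field_simp

lemma my_exp_029 : (4/3 : ℝ) ≤ Real.exp 0.29 := by
  have h1 : (1 : ℝ) + 0.0090625 ≤ Real.exp 0.0090625 := by
    have := Real.add_one_le_exp (0.0090625 : ℝ); linarith
  have h2 : ((1 : ℝ) + 0.0090625) ^ (32 : ℕ) ≤ Real.exp 0.0090625 ^ (32 : ℕ) :=
    pow_le_pow_left₀ (by norm_num) h1 32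
  have h3 : Real.exp 0.0090625 ^ (32 : ℕ) = Real.exp 0.29 := by
    rw [← Real.exp_nat_mul]; norm_num
  have h4 : (4/3 : ℝ) ≤ ((1 : ℝ) + 0.0090625) ^ (32 : ℕ) := by norm_num
  linarith

lemma my_exp_neg_029 : Real.exp (-0.29) ≤ 3/4 := by
  rw [Real.exp_neg]
  rw [inv_le_comm₀ (Real.exp_pos _) (by norm_num)]
  have := my_exp_029; linarith

set_option maxHeartbeats 1000000 in
/-- Analytic core of Theorem 1: a splitting channel whose Gaussian-approximation polarization
trajectory lies in `T_s(2^{−4}) ∩ U_{s,n}(1/20)` (odd steps lose at most `3.73 ln 2`, even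
steps double, the LLR mean stays above `14.92 ln 2`, and at least a `9/20` fraction of the
steps are doubling steps) has bit error probability
`Q(√(m(n)/2)) < 2^{−2.33(n−s)/2 − 3.73}`, i.e. `O(N^{−2.33/2})` for code length `N = 2^n`. -/
theorem ga_splitting_channel_ber_bound (s n : ℕ) (hsn : s ≤ n)
    (m : ℕ → ℝ) (p : ℕ → ℕ) (hp : ∀ i, p i = 0 ∨ p i = 1)
    (hstep : ∀ i, s ≤ i → i < n →
      (p (i + 1) = 0 → m (i + 1) ≥ m i - 3.73 * Real.log 2) ∧
      (p (i + 1) = 1 → m (i + 1) = 2 * m i))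
    (hT : ∀ i, s ≤ i → i ≤ n → m i ≥ 14.92 * Real.log 2)
    (hU : (∑ i ∈ Finset.Icc (s + 1) n, (p i : ℝ)) ≥ (9 / 20) * ((n : ℝ) - s)) :
    gaussQ (Real.sqrt (m n / 2)) < (2 : ℝ) ^ (-(2.33 * ((n : ℝ) - s)) / 2 - 3.73) := by
  set L : ℝ := Real.log 2 with hL
  have hL1 : (0.6931471 : ℝ) < L := by have := Real.log_two_gt_d9; rw [hL]; linarith
  have hL2 : L < 0.6931472 := by have := Real.log_two_lt_d9; rw [hL]; linarith
  have hL0 : (0:ℝ) < L := by linarith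
  -- partial sums of p
  set k : ℕ → ℕ := fun i => ∑ j ∈ Finset.Icc (s + 1) i, p j with hk
  have hkub : ∀ i, k i ≤ i - s := by
    intro i
    calc k i ≤ ∑ j ∈ Finset.Icc (s + 1) i, 1 := by
          apply Finset.sum_le_sum; intro j _; rcases hp j with h | h <;> omega
      _ = i - s := by rw [Finset.sum_const, smul_eq_mul, mul_one, Nat.card_Icc]; omega
  -- main induction
  have key : ∀ i, s ≤ i → i ≤ n →
      14.92 * L * ((3/4 : ℝ) ^ (i - s - k i) * 2 ^ (k i)) ≤ m i := by
    intro i hi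
    induction i, hi using Nat.le_induction with
    | base =>
      intro _
      have hks : k s = 0 := by
        rw [hk]; simp [Finset.Icc_eq_empty_of_lt (Nat.lt_succ_self s)]
      rw [hks]
      simpa using hT s le_rfl hsn
    | succ i hi ih =>
      intro hin
      have hin' : i ≤ n := by omega
      have ihv := ih hin'
      have hki : k (i + 1) = k i + p (i + 1) := by
        rw [hk]; exact Finset.sum_Icc_succ_top (by omega) p
      have hkle := hkub i
      have hstepi := hstep i hi (by omega)
      have hpow_pos : (0:ℝ) < (3/4 : ℝ) ^ (i - s - k i) * 2 ^ (k i) := by positivity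
      rcases hp (i + 1) with h0 | h1
      · -- odd step: m loses at most 3.73 L, and m i ≥ 14.92 L so keeps 3/4
        have hm1 : m (i + 1) ≥ m i - 3.73 * L := hstepi.1 h0
        have hmi : m i ≥ 14.92 * L := hT i hi hin'
        have hexp : i + 1 - s - k (i + 1) = (i - s - k i) + 1 := by
          rw [hki, h0]; omega
        rw [hexp, hki, h0, pow_succ]
        have : (14.92 : ℝ) * L * ((3/4) ^ (i - s - k i) * (3/4) * 2 ^ (k i + 0)) =
            (3/4) * (14.92 * L * ((3/4) ^ (i - s - k i) * 2 ^ (k i))) := by ring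
        rw [this]
        have h34 : (3/4 : ℝ) * m i ≤ m (i + 1) := by linarith
        have := mul_le_mul_of_nonneg_left ihv (by norm_num : (0:ℝ) ≤ 3/4)
        linarith
      · -- doubling step
        have hm1 : m (i + 1) = 2 * m i := hstepi.2 h1
        have hexp : i + 1 - s - k (i + 1) = i - s - k i := by
          rw [hki, h1]; omega
        rw [hexp, hki, h1, pow_succ]
        have : (14.92 : ℝ) * L * ((3/4) ^ (i - s - k i) * (2 ^ (k i) * 2)) =
            2 * (14.92 * L * ((3/4) ^ (i - s - k i) * 2 ^ (k i))) := by ring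
        rw [this, hm1]
        linarith
  have hmn := key n hsn le_rfl
  -- cast bookkeeping
  set D : ℝ := (n : ℝ) - s with hD
  have hD0 : (0:ℝ) ≤ D := by
    rw [hD]; have : (s:ℝ) ≤ n := Nat.cast_le.mpr hsn; linarith
  have hdcast : ((n - s : ℕ) : ℝ) = D := by
    rw [hD, Nat.cast_sub hsn]
  have hK45 : (0.45 : ℝ) * D ≤ (k n : ℝ) := by
    have : (∑ i ∈ Finset.Icc (s + 1) n, (p i : ℝ)) = ((k n : ℕ) : ℝ) := by
      rw [hk]; push_cast; ring
    rw [this] at hU; rw [hD]; linarith [hU]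
  -- exponential lower bound on the product of powers
  have hpow1 : Real.exp (-0.29) ^ (n - s - k n) ≤ (3/4 : ℝ) ^ (n - s - k n) :=
    pow_le_pow_left₀ (Real.exp_pos _).le my_exp_neg_029 _
  have hpow2 : (2 : ℝ) ^ (k n) = Real.exp ((k n : ℝ) * L) := by
    rw [Real.exp_nat_mul, hL, Real.exp_log (by norm_num : (0:ℝ) < 2)]
  have hpow1' : Real.exp (-0.29) ^ (n - s - k n) =
      Real.exp (((n - s - k n : ℕ) : ℝ) * (-0.29)) := by
    rw [Real.exp_nat_mul]
  have hprod : Real.exp (((n - s - k n : ℕ) : ℝ) * (-0.29) + (k n : ℝ) * L) ≤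
      (3/4 : ℝ) ^ (n - s - k n) * 2 ^ (k n) := by
    rw [Real.exp_add, hpow2]
    exact mul_le_mul_of_nonneg_right (by rw [← hpow1']; exact hpow1) (Real.exp_pos _).le
  -- the exponent is at least 0.152416 * D
  have hkub' : k n ≤ n - s := hkub n
  have hcast2 : ((n - s - k n : ℕ) : ℝ) = D - (k n : ℝ) := by
    rw [Nat.cast_sub hkub', hdcast]
  have hexp_ge : (0.152416 : ℝ) * D ≤ ((n - s - k n : ℕ) : ℝ) * (-0.29) + (k n : ℝ) * L := by
    rw [hcast2]
    nlinarith [hK45, hD0, hL1]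
  have hquad : 1 + 0.152416 * D + (0.152416 * D) ^ 2 / 2 ≤
      Real.exp ((0.152416 : ℝ) * D) :=
    Real.quadratic_le_exp_of_nonneg (by nlinarith)
  have hM : 14.92 * L * (1 + 0.152416 * D + (0.152416 * D) ^ 2 / 2) ≤ m n := by
    have h1 : Real.exp ((0.152416 : ℝ) * D) ≤ (3/4 : ℝ) ^ (n - s - k n) * 2 ^ (k n) :=
      le_trans (Real.exp_le_exp.mpr hexp_ge) hprod
    have h2 : 14.92 * L * (1 + 0.152416 * D + (0.152416 * D) ^ 2 / 2) ≤
        14.92 * L * ((3/4 : ℝ) ^ (n - s - k n) * 2 ^ (k n)) := by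
      apply mul_le_mul_of_nonneg_left (le_trans hquad h1) (by positivity)
    linarith
  -- lower bounds on m n
  have hTn := hT n hsn le_rfl
  have hMpos : (4:ℝ) ≤ m n / 2 := by linarith
  have hM0 : (0:ℝ) ≤ m n := by linarith
  -- the Q-function bound
  set x : ℝ := Real.sqrt (m n / 2) with hx
  have hx2 : x ^ 2 = m n / 2 := Real.sq_sqrt (by linarith)
  have hxge : (2:ℝ) ≤ x := by
    rw [hx]
    exact Real.le_sqrt_of_sq_le (by linarith)
  have hxpos : (0:ℝ) < x := by linarith
  have hsqrtpi : (2.5 : ℝ) ≤ Real.sqrt (2 * Real.pi) := by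
    apply Real.le_sqrt_of_sq_le
    have := Real.pi_gt_d6; nlinarith
  have hQ : gaussQ x ≤ Real.exp (-(m n) / 4) / 5 := by
    have h1 := my_gaussQ_le hxpos
    have h2 : -x ^ 2 / 2 = -(m n) / 4 := by rw [hx2]; ring
    rw [h2] at h1
    refine le_trans h1 ?_
    apply div_le_div_of_nonneg_left (Real.exp_pos _).le (by norm_num)
    nlinarith
  -- log 5 lower bound
  have hlog5 : 2 * L + 1/5 ≤ Real.log 5 := by
    have h45 : Real.log (4/5) ≤ 4/5 - 1 := Real.log_le_sub_one_of_pos (by norm_num)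
    have h2 : Real.log (4/5) = Real.log 4 - Real.log 5 :=
      Real.log_div (by norm_num) (by norm_num)
    have h3 : Real.log 4 = 2 * L := by
      rw [show (4:ℝ) = 2^(2:ℕ) by norm_num, Real.log_pow, hL]; push_cast; ring
    rw [h2, h3] at h45; linarith
  -- final comparison
  have hrhs : (2 : ℝ) ^ (-(2.33 * ((n : ℝ) - s)) / 2 - 3.73) =
      Real.exp (L * (-(2.33 * D) / 2 - 3.73)) := by
    rw [Real.rpow_def_of_pos (by norm_num : (0:ℝ) < 2), hL, hD]
  rw [hrhs]
  refine lt_of_le_of_lt hQ ?_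
  rw [div_lt_iff₀ (by norm_num : (0:ℝ) < 5)]
  have h5 : (5:ℝ) = Real.exp (Real.log 5) := (Real.exp_log (by norm_num)).symm
  rw [h5, ← Real.exp_add]
  apply Real.exp_lt_exp.mpr
  nlinarith [hM, hlog5, hD0, hL1, hL2, mul_nonneg hL0.le (sq_nonneg (D - 6.884)),
    mul_nonneg (mul_nonneg hL0.le hD0) hD0, mul_nonneg hL0.le hD0]
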